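/- Under the root-subgroup data, Levi data, and almost-product data hypotheses, suppose K_L ≤ L satisfies conditions (3.1) and (3.2) with respect to L, and K_h ≤ G_h satisfies conditions (3.1) and (3.2) with respect to G_h. Then G_h ∩ K_L = K_h if and only if: K_L ∩ U_α = K_h ∩ U_α for every α ∈ Φ_h ∩ Φ_red, and Z_h ∩ K_L = Z_h ∩ K_h. (Abstract form of the paper's Corollary characterizing when G_h(F) ∩ K_L = K_h.) -/

import Mathlib

open Pointwise

section AxiomaticFramework

variable {G : Type*} [Group G] {ι : Type*}

/-- The subgroup generated by the root subgroups `U α` for `α ∈ s`. -/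
def genU (U : ι → Subgroup G) (s : Finset ι) : Subgroup G := ⨆ α ∈ s, U α

/-- The multiplication map attached to an enumeration `l` of a set of roots is a
bijection from `∏ (K ∩ U α)` onto `K ∩ T`. -/
def ProdBij (U : ι → Subgroup G) (K T : Subgroup G) (l : List ι) : Prop :=
  Function.Injective
    (fun x : ∀ i : Fin l.length, ↥(K ⊓ U (l.get i)) =>
      (List.ofFn fun i => ((x i : G))).prod) ∧
  Set.range
    (fun x : ∀ i : Fin l.length, ↥(K ⊓ U (l.get i)) =>
      (List.ofFn fun i => ((x i : G))).prod)
    = ((K ⊓ T : Subgroup G) : Set G)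

/-- Condition (3.1) for a subgroup `K`, relative to root subgroups `U`,
reduced positive roots `PRp`, reduced negative roots `PRm`, `U⁺ = Up`, `U⁻ = Um`, `N`. -/
def Cond31 (U : ι → Subgroup G) (PRp PRm : Finset ι) (Up Um N K : Subgroup G) : Prop :=
  ((K : Set G) = ↑(K ⊓ Um) * ↑(K ⊓ Up) * ↑(K ⊓ N)) ∧
  ((K : Set G) = ↑(K ⊓ Up) * ↑(K ⊓ Um) * ↑(K ⊓ N)) ∧
  (∀ l : List ι, l.Nodup → (∀ a, a ∈ l ↔ a ∈ PRp) → ProdBij U K Up l) ∧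
  (∀ l : List ι, l.Nodup → (∀ a, a ∈ l ↔ a ∈ PRm) → ProdBij U K Um l)

/-- Condition (3.2) for a subgroup `K`. -/
def Cond32 (Up Um Z K : Subgroup G) : Prop :=
  (K : Set G) = ↑(K ⊓ Up) * ↑(K ⊓ Um) * ↑(K ⊓ Up) * ↑(K ⊓ Z)

/-- Root-subgroup data: a finite set of roots `Phi` with a distinguished subset `PhiRed`
and a partition `Phi = PhiP ⊔ PhiM`, root subgroups `U α`, and subgroups `Z ≤ N`. -/
structure RootData (G : Type*) [Group G] (ι : Type*) [DecidableEq ι] where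
  Phi : Finset ι
  PhiRed : Finset ι
  PhiP : Finset ι
  PhiM : Finset ι
  red_sub : PhiRed ⊆ Phi
  union_eq : PhiP ∪ PhiM = Phi
  disj : Disjoint PhiP PhiM
  U : ι → Subgroup G
  Z : Subgroup G
  N : Subgroup G
  hZN : Z ≤ N

variable [DecidableEq ι]

namespace RootData

variable (D : RootData G ι)

/-- `U⁺`, the subgroup generated by the `U α`, `α ∈ Φ⁺`. -/
def Up : Subgroup G := genU D.U D.PhiP

/-- `U⁻`, the subgroup generated by the `U α`, `α ∈ Φ⁻`. -/
def Um : Subgroup G := genU D.U D.PhiM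

/-- Condition (3.1) with respect to `G`. -/
def cond31 (K : Subgroup G) : Prop :=
  Cond31 D.U (D.PhiRed ∩ D.PhiP) (D.PhiRed ∩ D.PhiM) D.Up D.Um D.N K

/-- Condition (3.2) with respect to `G`. -/
def cond32 (K : Subgroup G) : Prop := Cond32 D.Up D.Um D.Z K

end RootData

/-- Levi data (weak form): a subset `Φ_J ⊆ Φ` and subgroups `L, Q` with `Z ≤ L`,
`U_α ≤ L` for `α ∈ Φ_J`, and `U_J^± = L ∩ U^±` generated by the `U_α`, `α ∈ Φ_J^±`. -/
structure LeviDataW (D : RootData G ι) where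
  PhiJ : Finset ι
  J_sub : PhiJ ⊆ D.Phi
  L : Subgroup G
  Q : Subgroup G
  hZL : D.Z ≤ L
  hUL : ∀ α ∈ PhiJ, D.U α ≤ L
  hUJp : L ⊓ D.Up = genU D.U (PhiJ ∩ D.PhiP)
  hUJm : L ⊓ D.Um = genU D.U (PhiJ ∩ D.PhiM)

namespace LeviDataW

variable {D : RootData G ι} (LD : LeviDataW D)

/-- Condition (3.1) with respect to the Levi subgroup `L`. -/
def cond31L (K : Subgroup G) : Prop :=
  Cond31 D.U (LD.PhiJ ∩ D.PhiRed ∩ D.PhiP) (LD.PhiJ ∩ D.PhiRed ∩ D.PhiM)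
    (LD.L ⊓ D.Up) (LD.L ⊓ D.Um) (D.N ⊓ LD.L) K

/-- Condition (3.2) with respect to the Levi subgroup `L`. -/
def cond32L (K : Subgroup G) : Prop :=
  Cond32 (LD.L ⊓ D.Up) (LD.L ⊓ D.Um) D.Z K

end LeviDataW

/-- Almost-product data: a normal-factor subgroup `G_h ≤ L` with roots `Φ_h`, a
complementary set of roots `Φ_{l'}`, and a quotient homomorphism `π_l : L → G_l`. -/
structure APData {D : RootData G ι} (LD : LeviDataW D) (Gl : Type*) [Group Gl] where
  Gh : Subgroup G
  hGhL : Gh ≤ LD.L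
  PhiH : Finset ι
  PhiL' : Finset ι
  hpartJ : PhiH ∪ PhiL' = LD.PhiJ
  hdisjHL : Disjoint PhiH PhiL'
  hUGh : ∀ α ∈ PhiH, D.U α ≤ Gh
  /-- every element of `U_h⁺U_h⁻` commutes with every element of `U_{l'}⁺U_{l'}⁻` -/
  hcomm : ∀ x ∈ ((genU D.U (PhiH ∩ D.PhiP) : Subgroup G) : Set G) *
      ((genU D.U (PhiH ∩ D.PhiM) : Subgroup G) : Set G),
      ∀ y ∈ ((genU D.U (PhiL' ∩ D.PhiP) : Subgroup G) : Set G) *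
      ((genU D.U (PhiL' ∩ D.PhiM) : Subgroup G) : Set G),
      x * y = y * x
  /-- the quotient homomorphism `π_l : L → G_l` -/
  pil : ↥LD.L →* Gl
  /-- `G_h ⊆ ker π_l` -/
  hGh_ker : ∀ x : ↥LD.L, (x : G) ∈ Gh → pil x = 1
  /-- `Z ∩ ker π_l ⊆ G_h` -/
  hker_Z : ∀ x : ↥LD.L, (x : G) ∈ D.Z → pil x = 1 → (x : G) ∈ Gh
  /-- `π_l` is injective on `U_{l'}⁺` -/
  hinj_p : ∀ x y : ↥LD.L, (x : G) ∈ genU D.U (PhiL' ∩ D.PhiP) →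
      (y : G) ∈ genU D.U (PhiL' ∩ D.PhiP) → pil x = pil y → x = y
  /-- `π_l` is injective on `U_{l'}⁻` -/
  hinj_m : ∀ x y : ↥LD.L, (x : G) ∈ genU D.U (PhiL' ∩ D.PhiM) →
      (y : G) ∈ genU D.U (PhiL' ∩ D.PhiM) → pil x = pil y → x = y
  /-- `Z_l ⊆ N_l` -/
  hZlNl : (D.Z.subgroupOf LD.L).map pil ≤ ((D.N ⊓ LD.L).subgroupOf LD.L).map pil
  /-- `Z_l` normalizes `U_l⁺` -/
  hZl_norm_p : ∀ z ∈ (D.Z.subgroupOf LD.L).map pil,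
      ∀ u ∈ ((genU D.U (PhiL' ∩ D.PhiP)).subgroupOf LD.L).map pil,
      z * u * z⁻¹ ∈ ((genU D.U (PhiL' ∩ D.PhiP)).subgroupOf LD.L).map pil
  /-- `Z_l` normalizes `U_l⁻` -/
  hZl_norm_m : ∀ z ∈ (D.Z.subgroupOf LD.L).map pil,
      ∀ u ∈ ((genU D.U (PhiL' ∩ D.PhiM)).subgroupOf LD.L).map pil,
      z * u * z⁻¹ ∈ ((genU D.U (PhiL' ∩ D.PhiM)).subgroupOf LD.L).map pil
  /-- in `G_l`, the only solution of `u⁺u⁻n = 1` with `u⁺ ∈ U_l⁺`, `u⁻ ∈ U_l⁻`,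
  `n ∈ N_l` is the trivial one -/
  huniq : ∀ up um n : Gl,
      up ∈ ((genU D.U (PhiL' ∩ D.PhiP)).subgroupOf LD.L).map pil →
      um ∈ ((genU D.U (PhiL' ∩ D.PhiM)).subgroupOf LD.L).map pil →
      n ∈ ((D.N ⊓ LD.L).subgroupOf LD.L).map pil →
      up * um * n = 1 → up = 1 ∧ um = 1 ∧ n = 1

namespace APData

variable {D : RootData G ι} {LD : LeviDataW D} {Gl : Type*} [Group Gl] (AP : APData LD Gl)

/-- Condition (3.1) with respect to the normal subgroup `G_h`. -/
def cond31h (Kh : Subgroup G) : Prop :=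
  Cond31 D.U (AP.PhiH ∩ D.PhiRed ∩ D.PhiP) (AP.PhiH ∩ D.PhiRed ∩ D.PhiM)
    (genU D.U (AP.PhiH ∩ D.PhiP)) (genU D.U (AP.PhiH ∩ D.PhiM)) (D.N ⊓ AP.Gh) Kh

/-- Condition (3.2) with respect to the normal subgroup `G_h`. -/
def cond32h (Kh : Subgroup G) : Prop :=
  Cond32 (genU D.U (AP.PhiH ∩ D.PhiP)) (genU D.U (AP.PhiH ∩ D.PhiM)) (D.Z ⊓ AP.Gh) Kh

end APData

end AxiomaticFramework

section AuxLemmas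

variable {G : Type*} [Group G] {ι : Type*}

lemma U_le_genU' (U : ι → Subgroup G) {s : Finset ι} {α : ι} (h : α ∈ s) :
    U α ≤ genU U s := le_iSup₂ (f := fun i (_ : i ∈ s) => U i) α h

lemma genU_le' (U : ι → Subgroup G) {s : Finset ι} {H : Subgroup G}
    (h : ∀ α ∈ s, U α ≤ H) : genU U s ≤ H := iSup₂_le h

lemma list_prod_split' (A B : Subgroup G)
    (hc : ∀ a ∈ A, ∀ b ∈ B, a * b = b * a) :
    ∀ l : List G, (∀ x ∈ l, x ∈ A ∨ x ∈ B) →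
      ∃ a ∈ A, ∃ b ∈ B, l.prod = a * b := by
  intro l
  induction l with
  | nil => exact fun _ => ⟨1, A.one_mem, 1, B.one_mem, by simp⟩
  | cons x l ih =>
    intro h
    obtain ⟨a, ha, b, hb, hl⟩ := ih (fun y hy => h y (List.mem_cons_of_mem _ hy))
    rcases h x List.mem_cons_self with hx | hx
    · exact ⟨x * a, A.mul_mem hx ha, b, hb, by rw [List.prod_cons, hl, mul_assoc]⟩
    · refine ⟨a, ha, x * b, B.mul_mem hx hb, ?_⟩
      rw [List.prod_cons, hl, ← mul_assoc, ← hc a ha x hx, mul_assoc]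

lemma decomp_aux' [DecidableEq ι] (U : ι → Subgroup G) (KL T A B : Subgroup G) (S : Finset ι)
    (hPB : ∀ l : List ι, l.Nodup → (∀ a, a ∈ l ↔ a ∈ S) → ProdBij U KL T l)
    (hAB : ∀ α ∈ S, KL ⊓ U α ≤ A ∨ KL ⊓ U α ≤ B)
    (hc : ∀ a ∈ A, ∀ b ∈ B, a * b = b * a)
    {u : G} (hu : u ∈ KL ⊓ T) :
    ∃ a ∈ A, ∃ b ∈ B, u = a * b := by
  obtain ⟨_, hrange⟩ := hPB S.toList S.nodup_toList (fun a => S.mem_toList)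
  have hu' : u ∈ ((KL ⊓ T : Subgroup G) : Set G) := hu
  rw [← hrange] at hu'
  obtain ⟨x, hx⟩ := hu'
  have hall : ∀ g ∈ (List.ofFn fun i => ((x i : G))), g ∈ A ∨ g ∈ B := by
    intro g hg
    rw [List.mem_ofFn] at hg
    obtain ⟨i, rfl⟩ := hg
    have hmem := (x i).2
    have hS : S.toList.get i ∈ S := Finset.mem_toList.mp (S.toList.get_mem i)
    rcases hAB _ hS with h | h
    · exact Or.inl (h hmem)
    · exact Or.inr (h hmem)
  obtain ⟨a, ha, b, hb, hprod⟩ := list_prod_split' A B hc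
    (List.ofFn fun i => ((x i : G))) hall
  exact ⟨a, ha, b, hb, by rw [← hx]; exact hprod⟩

lemma inf_le_of_prodbij' [DecidableEq ι] (U : ι → Subgroup G) (Kh T KL : Subgroup G)
    (S : Finset ι)
    (hPB : ∀ l : List ι, l.Nodup → (∀ a, a ∈ l ↔ a ∈ S) → ProdBij U Kh T l)
    (hle : ∀ α ∈ S, Kh ⊓ U α ≤ KL) :
    Kh ⊓ T ≤ KL := by
  intro u hu
  obtain ⟨_, hrange⟩ := hPB S.toList S.nodup_toList (fun a => S.mem_toList)
  have hu' : u ∈ ((Kh ⊓ T : Subgroup G) : Set G) := hu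
  rw [← hrange] at hu'
  obtain ⟨x, hx⟩ := hu'
  rw [← hx]
  apply KL.list_prod_mem
  intro g hg
  rw [List.mem_ofFn] at hg
  obtain ⟨i, rfl⟩ := hg
  exact hle _ (Finset.mem_toList.mp (S.toList.get_mem i)) (x i).2

end AuxLemmas

/-- Suppose `K_L ≤ L` satisfies conditions (3.1) and (3.2) with
respect to `L`, and `K_h ≤ G_h` satisfies conditions (3.1) and (3.2) with respect to
`G_h`. Then `G_h ∩ K_L = K_h` if and only if `K_L ∩ U_α = K_h ∩ U_α` for every
`α ∈ Φ_h ∩ Φ_red` and `Z_h ∩ K_L = Z_h ∩ K_h`. -/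
theorem stmt7 {G : Type*} [Group G] {ι : Type*} [DecidableEq ι] {Gl : Type*} [Group Gl]
    (D : RootData G ι) (LD : LeviDataW D) (AP : APData LD Gl)
    (KL Kh : Subgroup G) (hKLle : KL ≤ LD.L) (hKhle : Kh ≤ AP.Gh)
    (hKL31 : LD.cond31L KL) (hKL32 : LD.cond32L KL)
    (hKh31 : AP.cond31h Kh) (hKh32 : AP.cond32h Kh) :
    AP.Gh ⊓ KL = Kh ↔
      ((∀ α ∈ AP.PhiH ∩ D.PhiRed, KL ⊓ D.U α = Kh ⊓ D.U α) ∧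
        (D.Z ⊓ AP.Gh) ⊓ KL = (D.Z ⊓ AP.Gh) ⊓ Kh) := by
  constructor
  · -- forward direction
    intro hEq
    constructor
    · intro α hα
      have hUGh : D.U α ≤ AP.Gh := AP.hUGh α (Finset.mem_inter.mp hα).1
      rw [← hEq]
      apply le_antisymm
      · intro x hx
        obtain ⟨h1, h2⟩ := Subgroup.mem_inf.mp hx
        exact Subgroup.mem_inf.mpr ⟨Subgroup.mem_inf.mpr ⟨hUGh h2, h1⟩, h2⟩
      · intro x hx
        obtain ⟨h1, h2⟩ := Subgroup.mem_inf.mp hx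
        exact Subgroup.mem_inf.mpr ⟨(Subgroup.mem_inf.mp h1).2, h2⟩
    · rw [← hEq]
      apply le_antisymm
      · intro x hx
        obtain ⟨h1, h2⟩ := Subgroup.mem_inf.mp hx
        exact Subgroup.mem_inf.mpr ⟨h1, Subgroup.mem_inf.mpr
          ⟨(Subgroup.mem_inf.mp h1).2, h2⟩⟩
      · intro x hx
        obtain ⟨h1, h2⟩ := Subgroup.mem_inf.mp hx
        exact Subgroup.mem_inf.mpr ⟨h1, (Subgroup.mem_inf.mp h2).2⟩
  · -- backward direction
    rintro ⟨hU, hZ⟩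
    -- notation
    set Uhp := genU D.U (AP.PhiH ∩ D.PhiP) with hUhp_def
    set Uhm := genU D.U (AP.PhiH ∩ D.PhiM) with hUhm_def
    set Ulp := genU D.U (AP.PhiL' ∩ D.PhiP) with hUlp_def
    set Ulm := genU D.U (AP.PhiL' ∩ D.PhiM) with hUlm_def
    -- basic containments
    have hUhpGh : Uhp ≤ AP.Gh :=
      genU_le' D.U fun α hα => AP.hUGh α (Finset.mem_inter.mp hα).1
    have hUhmGh : Uhm ≤ AP.Gh :=
      genU_le' D.U fun α hα => AP.hUGh α (Finset.mem_inter.mp hα).1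
    -- commutation
    have hcommHL : ∀ a : G, (a ∈ Uhp ∨ a ∈ Uhm) → ∀ b : G, (b ∈ Ulp ∨ b ∈ Ulm) →
        a * b = b * a := by
      intro a ha b hb
      apply AP.hcomm
      · rcases ha with h | h
        · exact ⟨a, h, 1, Subgroup.one_mem _, mul_one a⟩
        · exact ⟨1, Subgroup.one_mem _, a, h, one_mul a⟩
      · rcases hb with h | h
        · exact ⟨b, h, 1, Subgroup.one_mem _, mul_one b⟩
        · exact ⟨1, Subgroup.one_mem _, b, h, one_mul b⟩
    -- decomposition lemmas
    have h31 : Cond31 D.U (LD.PhiJ ∩ D.PhiRed ∩ D.PhiP) (LD.PhiJ ∩ D.PhiRed ∩ D.PhiM)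
        (LD.L ⊓ D.Up) (LD.L ⊓ D.Um) (D.N ⊓ LD.L) KL := hKL31
    have hABp : ∀ α ∈ LD.PhiJ ∩ D.PhiRed ∩ D.PhiP,
        KL ⊓ D.U α ≤ Kh ⊓ Uhp ∨ KL ⊓ D.U α ≤ KL ⊓ Ulp := by
      intro α hα
      obtain ⟨hαJR, hαP⟩ := Finset.mem_inter.mp hα
      obtain ⟨hαJ, hαR⟩ := Finset.mem_inter.mp hαJR
      rw [← AP.hpartJ] at hαJ
      rcases Finset.mem_union.mp hαJ with h | h
      · left
        rw [hU α (Finset.mem_inter.mpr ⟨h, hαR⟩)]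
        exact le_inf inf_le_left
          (inf_le_right.trans (U_le_genU' D.U (Finset.mem_inter.mpr ⟨h, hαP⟩)))
      · right
        exact le_inf inf_le_left
          (inf_le_right.trans (U_le_genU' D.U (Finset.mem_inter.mpr ⟨h, hαP⟩)))
    have hABm : ∀ α ∈ LD.PhiJ ∩ D.PhiRed ∩ D.PhiM,
        KL ⊓ D.U α ≤ Kh ⊓ Uhm ∨ KL ⊓ D.U α ≤ KL ⊓ Ulm := by
      intro α hα
      obtain ⟨hαJR, hαM⟩ := Finset.mem_inter.mp hα
      obtain ⟨hαJ, hαR⟩ := Finset.mem_inter.mp hαJR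
      rw [← AP.hpartJ] at hαJ
      rcases Finset.mem_union.mp hαJ with h | h
      · left
        rw [hU α (Finset.mem_inter.mpr ⟨h, hαR⟩)]
        exact le_inf inf_le_left
          (inf_le_right.trans (U_le_genU' D.U (Finset.mem_inter.mpr ⟨h, hαM⟩)))
      · right
        exact le_inf inf_le_left
          (inf_le_right.trans (U_le_genU' D.U (Finset.mem_inter.mpr ⟨h, hαM⟩)))
    have hdecP : ∀ u ∈ KL ⊓ (LD.L ⊓ D.Up),
        ∃ a ∈ Kh ⊓ Uhp, ∃ b ∈ KL ⊓ Ulp, u = a * b := by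
      intro u hu
      refine decomp_aux' D.U KL (LD.L ⊓ D.Up) (Kh ⊓ Uhp) (KL ⊓ Ulp)
        (LD.PhiJ ∩ D.PhiRed ∩ D.PhiP) h31.2.2.1 hABp ?_ hu
      intro a ha b hb
      exact hcommHL a (Or.inl (Subgroup.mem_inf.mp ha).2) b
        (Or.inl (Subgroup.mem_inf.mp hb).2)
    have hdecM : ∀ u ∈ KL ⊓ (LD.L ⊓ D.Um),
        ∃ a ∈ Kh ⊓ Uhm, ∃ b ∈ KL ⊓ Ulm, u = a * b := by
      intro u hu
      refine decomp_aux' D.U KL (LD.L ⊓ D.Um) (Kh ⊓ Uhm) (KL ⊓ Ulm)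
        (LD.PhiJ ∩ D.PhiRed ∩ D.PhiM) h31.2.2.2 hABm ?_ hu
      intro a ha b hb
      exact hcommHL a (Or.inr (Subgroup.mem_inf.mp ha).2) b
        (Or.inr (Subgroup.mem_inf.mp hb).2)
    apply le_antisymm
    · -- Gh ⊓ KL ≤ Kh
      intro x hx
      obtain ⟨hxGh, hxKL⟩ := Subgroup.mem_inf.mp hx
      have h32 : (KL : Set G) = ↑(KL ⊓ (LD.L ⊓ D.Up)) * ↑(KL ⊓ (LD.L ⊓ D.Um)) *
          ↑(KL ⊓ (LD.L ⊓ D.Up)) * ↑(KL ⊓ D.Z) := hKL32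
      have hx32 : x ∈ (↑(KL ⊓ (LD.L ⊓ D.Up)) * ↑(KL ⊓ (LD.L ⊓ D.Um)) *
          ↑(KL ⊓ (LD.L ⊓ D.Up)) * ↑(KL ⊓ D.Z) : Set G) := by
        rw [← h32]; exact hxKL
      obtain ⟨w, hw, z, hzmem, hwz⟩ := hx32
      obtain ⟨v, hv, p', hp', hvp⟩ := hw
      obtain ⟨p, hp, m, hm, hpm⟩ := hv
      obtain ⟨a₁, ha₁, b₁, hb₁, hpe⟩ := hdecP p hp
      obtain ⟨a₂, ha₂, b₂, hb₂, hme⟩ := hdecM m hm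
      obtain ⟨a₃, ha₃, b₃, hb₃, hpe'⟩ := hdecP p' hp'
      -- membership bookkeeping
      have ha₁Kh : a₁ ∈ Kh := (Subgroup.mem_inf.mp ha₁).1
      have ha₂Kh : a₂ ∈ Kh := (Subgroup.mem_inf.mp ha₂).1
      have ha₃Kh : a₃ ∈ Kh := (Subgroup.mem_inf.mp ha₃).1
      have ha₁Gh : a₁ ∈ AP.Gh := hKhle ha₁Kh
      have ha₂Gh : a₂ ∈ AP.Gh := hKhle ha₂Kh
      have ha₃Gh : a₃ ∈ AP.Gh := hKhle ha₃Kh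
      have ha₂Um : a₂ ∈ Uhm := (Subgroup.mem_inf.mp ha₂).2
      have ha₃Up : a₃ ∈ Uhp := (Subgroup.mem_inf.mp ha₃).2
      have hb₁Ul : b₁ ∈ Ulp := (Subgroup.mem_inf.mp hb₁).2
      have hb₂Ul : b₂ ∈ Ulm := (Subgroup.mem_inf.mp hb₂).2
      have hb₃Ul : b₃ ∈ Ulp := (Subgroup.mem_inf.mp hb₃).2
      have hzKL : z ∈ KL := (Subgroup.mem_inf.mp hzmem).1
      have hzZ : z ∈ D.Z := (Subgroup.mem_inf.mp hzmem).2
      have ha₁L : a₁ ∈ LD.L := AP.hGhL ha₁Gh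
      have ha₂L : a₂ ∈ LD.L := AP.hGhL ha₂Gh
      have ha₃L : a₃ ∈ LD.L := AP.hGhL ha₃Gh
      have hb₁L : b₁ ∈ LD.L := hKLle (Subgroup.mem_inf.mp hb₁).1
      have hb₂L : b₂ ∈ LD.L := hKLle (Subgroup.mem_inf.mp hb₂).1
      have hb₃L : b₃ ∈ LD.L := hKLle (Subgroup.mem_inf.mp hb₃).1
      have hzL : z ∈ LD.L := hKLle hzKL
      have hxL : x ∈ LD.L := hKLle hxKL
      -- the G-level product formula
      have hxG : x = ((a₁ * b₁ * (a₂ * b₂)) * (a₃ * b₃)) * z := by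
        rw [← hwz, ← hvp, ← hpm, hpe, hme, hpe']
      -- pass to L and apply π
      have hXeq : (⟨x, hxL⟩ : LD.L) =
          (((⟨a₁, ha₁L⟩ : LD.L) * ⟨b₁, hb₁L⟩ * ((⟨a₂, ha₂L⟩ : LD.L) * ⟨b₂, hb₂L⟩)) *
            ((⟨a₃, ha₃L⟩ : LD.L) * ⟨b₃, hb₃L⟩)) * ⟨z, hzL⟩ := by
        apply Subtype.ext
        exact hxG
      have hπx : AP.pil ⟨x, hxL⟩ = 1 := AP.hGh_ker _ hxGh
      have hπa₁ : AP.pil ⟨a₁, ha₁L⟩ = 1 := AP.hGh_ker _ ha₁Gh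
      have hπa₂ : AP.pil ⟨a₂, ha₂L⟩ = 1 := AP.hGh_ker _ ha₂Gh
      have hπa₃ : AP.pil ⟨a₃, ha₃L⟩ = 1 := AP.hGh_ker _ ha₃Gh
      have h1 := congrArg AP.pil hXeq
      simp only [map_mul, hπx, hπa₁, hπa₂, hπa₃, one_mul] at h1
      set β₁ := AP.pil ⟨b₁, hb₁L⟩ with hβ₁def
      set β₂ := AP.pil ⟨b₂, hb₂L⟩ with hβ₂def
      set β₃ := AP.pil ⟨b₃, hb₃L⟩ with hβ₃def
      set ζ := AP.pil ⟨z, hzL⟩ with hζdef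
      have h1' : β₁ * β₂ * β₃ * ζ = 1 := by
        rw [← h1]
      -- Gl memberships
      have hβ₁PP : β₁ ∈ (Ulp.subgroupOf LD.L).map AP.pil :=
        Subgroup.mem_map.mpr ⟨⟨b₁, hb₁L⟩, Subgroup.mem_subgroupOf.mpr hb₁Ul, rfl⟩
      have hβ₂MM : β₂ ∈ (Ulm.subgroupOf LD.L).map AP.pil :=
        Subgroup.mem_map.mpr ⟨⟨b₂, hb₂L⟩, Subgroup.mem_subgroupOf.mpr hb₂Ul, rfl⟩
      have hβ₃PP : β₃ ∈ (Ulp.subgroupOf LD.L).map AP.pil :=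
        Subgroup.mem_map.mpr ⟨⟨b₃, hb₃L⟩, Subgroup.mem_subgroupOf.mpr hb₃Ul, rfl⟩
      have hζZZ : ζ ∈ (D.Z.subgroupOf LD.L).map AP.pil :=
        Subgroup.mem_map.mpr ⟨⟨z, hzL⟩, Subgroup.mem_subgroupOf.mpr hzZ, rfl⟩
      -- juggle
      have hγ : ζ⁻¹ * β₃ * ζ⁻¹⁻¹ ∈ (Ulp.subgroupOf LD.L).map AP.pil :=
        AP.hZl_norm_p ζ⁻¹ (Subgroup.inv_mem _ hζZZ) β₃ hβ₃PP
      rw [inv_inv] at hγ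
      have e3 : (ζ⁻¹ * β₃ * ζ) * β₁ * β₂ * ζ = 1 := by
        have e2 : β₁ * β₂ * ζ * (ζ⁻¹ * β₃ * ζ) = 1 := by
          rw [show β₁ * β₂ * ζ * (ζ⁻¹ * β₃ * ζ) = β₁ * β₂ * β₃ * ζ by group]
          exact h1'
        calc (ζ⁻¹ * β₃ * ζ) * β₁ * β₂ * ζ
            = (ζ⁻¹ * β₃ * ζ) * (β₁ * β₂ * ζ * (ζ⁻¹ * β₃ * ζ)) * (ζ⁻¹ * β₃ * ζ)⁻¹ := by
              group
          _ = 1 := by rw [e2]; group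
      obtain ⟨hup, hum, hn⟩ := AP.huniq ((ζ⁻¹ * β₃ * ζ) * β₁) β₂ ζ
        (Subgroup.mul_mem _ hγ hβ₁PP) hβ₂MM (AP.hZlNl hζZZ) e3
      -- consequences
      have hβ31 : β₃ * β₁ = 1 := by
        rw [hn] at hup
        simpa using hup
      have hb₂1 : b₂ = 1 := by
        have hB2 : (⟨b₂, hb₂L⟩ : LD.L) = 1 := by
          apply AP.hinj_m ⟨b₂, hb₂L⟩ 1 hb₂Ul
          · rw [OneMemClass.coe_one]; exact Subgroup.one_mem _
          · rw [map_one]; exact hum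
        simpa using Subtype.ext_iff.mp hB2
      have hb31 : b₃ * b₁ = 1 := by
        have hB31 : ((⟨b₃, hb₃L⟩ : LD.L) * ⟨b₁, hb₁L⟩) = 1 := by
          apply AP.hinj_p _ 1
          · exact Subgroup.mul_mem _ hb₃Ul hb₁Ul
          · rw [OneMemClass.coe_one]; exact Subgroup.one_mem _
          · rw [map_mul, map_one]; exact hβ31
        simpa using Subtype.ext_iff.mp hB31
      have hb13 : b₁ * b₃ = 1 := by
        rw [show b₁ = b₃⁻¹ from eq_inv_of_mul_eq_one_right hb31]
        group
      have hzGh : z ∈ AP.Gh := AP.hker_Z ⟨z, hzL⟩ hzZ hn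
      have hzKh : z ∈ Kh := by
        have hzm : z ∈ (D.Z ⊓ AP.Gh) ⊓ KL :=
          Subgroup.mem_inf.mpr ⟨Subgroup.mem_inf.mpr ⟨hzZ, hzGh⟩, hzKL⟩
        rw [hZ] at hzm
        exact (Subgroup.mem_inf.mp hzm).2
      -- final assembly
      have w12 : a₂ * b₁ = b₁ * a₂ := hcommHL a₂ (Or.inr ha₂Um) b₁ (Or.inl hb₁Ul)
      have w13 : a₃ * b₁ = b₁ * a₃ := hcommHL a₃ (Or.inl ha₃Up) b₁ (Or.inl hb₁Ul)
      have hxe : x = a₁ * (a₂ * (a₃ * z)) := by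
        rw [hxG, hb₂1, mul_one]
        simp only [mul_assoc]
        rw [← mul_assoc b₁ a₂, ← w12, mul_assoc a₂]
        rw [← mul_assoc b₁ a₃, ← w13, mul_assoc a₃]
        rw [← mul_assoc b₁ b₃, hb13, one_mul]
      rw [hxe]
      exact Kh.mul_mem ha₁Kh (Kh.mul_mem ha₂Kh (Kh.mul_mem ha₃Kh hzKh))
    · -- Kh ≤ Gh ⊓ KL
      refine le_inf hKhle ?_
      have hKh31' : Cond31 D.U (AP.PhiH ∩ D.PhiRed ∩ D.PhiP)
          (AP.PhiH ∩ D.PhiRed ∩ D.PhiM) Uhp Uhm (D.N ⊓ AP.Gh) Kh := hKh31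
      have hlep : Kh ⊓ Uhp ≤ KL := by
        refine inf_le_of_prodbij' D.U Kh Uhp KL (AP.PhiH ∩ D.PhiRed ∩ D.PhiP)
          hKh31'.2.2.1 ?_
        intro α hα
        obtain ⟨hαHR, _⟩ := Finset.mem_inter.mp hα
        rw [← hU α hαHR]
        exact inf_le_left
      have hlem : Kh ⊓ Uhm ≤ KL := by
        refine inf_le_of_prodbij' D.U Kh Uhm KL (AP.PhiH ∩ D.PhiRed ∩ D.PhiM)
          hKh31'.2.2.2 ?_
        intro α hα
        obtain ⟨hαHR, _⟩ := Finset.mem_inter.mp hα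
        rw [← hU α hαHR]
        exact inf_le_left
      intro x hx
      have h32 : (Kh : Set G) = ↑(Kh ⊓ Uhp) * ↑(Kh ⊓ Uhm) * ↑(Kh ⊓ Uhp) *
          ↑(Kh ⊓ (D.Z ⊓ AP.Gh)) := hKh32
      have hx32 : x ∈ (↑(Kh ⊓ Uhp) * ↑(Kh ⊓ Uhm) * ↑(Kh ⊓ Uhp) *
          ↑(Kh ⊓ (D.Z ⊓ AP.Gh)) : Set G) := by
        rw [← h32]; exact hx
      obtain ⟨w, hw, z, hzmem, hwz⟩ := hx32
      obtain ⟨v, hv, p', hp', hvp⟩ := hw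
      obtain ⟨p, hp, m, hm, hpm⟩ := hv
      have hzKL : z ∈ KL := by
        have hzm : z ∈ (D.Z ⊓ AP.Gh) ⊓ Kh := Subgroup.mem_inf.mpr
          ⟨(Subgroup.mem_inf.mp hzmem).2, (Subgroup.mem_inf.mp hzmem).1⟩
        rw [← hZ] at hzm
        exact (Subgroup.mem_inf.mp hzm).2
      rw [← hwz, ← hvp, ← hpm]
      exact KL.mul_mem (KL.mul_mem (KL.mul_mem (hlep hp) (hlem hm)) (hlep hp')) hzKL
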